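/- In the large global game: if H ⊆ Δ(T) is closed, then the map β ↦ F_β(H) is upper semicontinuous on Δ(T); consequently, for every closed H ⊆ Δ(T), the sets B_x(H) and C_x(H) are closed. -/

import Mathlib

open MeasureTheory
open scoped NNReal
open scoped BoundedContinuousFunction ENNReal

noncomputable instance probMeasurableSpace {X : Type*} [MeasurableSpace X]
    [TopologicalSpace X] [OpensMeasurableSpace X] :
    MeasurableSpace (ProbabilityMeasure X) := borel _

instance probBorelSpace {X : Type*} [MeasurableSpace X]
    [TopologicalSpace X] [OpensMeasurableSpace X] :
    BorelSpace (ProbabilityMeasure X) := ⟨rfl⟩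

/-! The large global game: the action set is `A = {0,1}` (modeled as `Bool`, with
`false = 0 ≤ true = 1`), the set of states of nature is `S = [−1,2]`, and the payoff to a
player taking action `a` when the state of nature is `s` and the fraction of players playing
`1` is `ϑ` is `v(a,s,ϑ) = a·(s+ϑ−1)`.  `(T,σ,τ)` is a type space (no characteristics). -/

variable {T : Type*}
  [TopologicalSpace T] [CompactSpace T] [TopologicalSpace.MetrizableSpace T]
  [MeasurableSpace T] [BorelSpace T] [Nonempty T]

/-- Payoff in the global game: `v(a,s,ϑ) = a·(s+ϑ−1)`. -/
noncomputable def ggPayoff (a : Bool) (s ϑ : ℝ) : ℝ := if a then s + ϑ - 1 else 0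

/-- The fraction of players playing `1` under a belief-action profile `κ`. -/
noncomputable def ggTheta
    (κ : ProbabilityMeasure (ProbabilityMeasure T × Bool)) : ℝ :=
  (κ.toMeasure {p | p.2 = true}).toReal

/-- `𝒟_𝒮(t)`: profiles `κ ∈ Δ(Δ(T)×A)` supported on the graph of `𝒮` with
`Δ(T)`-marginal `τ(t)`. -/
def ggDOf (τ : T → ProbabilityMeasure (ProbabilityMeasure T))
    (𝒮 : ProbabilityMeasure T → Set Bool) (t : T) :
    Set (ProbabilityMeasure (ProbabilityMeasure T × Bool)) :=
  {κ | κ.toMeasure {p | p.2 ∈ 𝒮 p.1} = 1 ∧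
       κ.toMeasure.map Prod.fst = (τ t).toMeasure}

/-- `𝒮_𝒟(β)`: actions optimal against some belief `μ ∈ Δ(T×Δ(Δ(T)×A))` with `T`-marginal
`β` supported on the graph of `𝒟`. -/
noncomputable def ggSOf (σ : T → Set.Icc (-1:ℝ) 2)
    (𝒟 : T → Set (ProbabilityMeasure (ProbabilityMeasure T × Bool)))
    (β : ProbabilityMeasure T) : Set Bool :=
  {a | ∃ μ : ProbabilityMeasure (T × ProbabilityMeasure (ProbabilityMeasure T × Bool)),
    μ.toMeasure.map Prod.fst = β.toMeasure ∧
    μ.toMeasure {p | p.2 ∈ 𝒟 p.1} = 1 ∧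
    ∀ a' : Bool,
      ∫ p, ggPayoff a' (σ p.1 : ℝ) (ggTheta p.2) ∂μ.toMeasure ≤
      ∫ p, ggPayoff a (σ p.1 : ℝ) (ggTheta p.2) ∂μ.toMeasure}

/-- Iterated elimination: `𝒮₀(β) = {0,1}` and `𝒮_{m+1} = 𝒮_{𝒟_{𝒮_m}}`. -/
noncomputable def ggSseq (σ : T → Set.Icc (-1:ℝ) 2)
    (τ : T → ProbabilityMeasure (ProbabilityMeasure T)) :
    ℕ → (ProbabilityMeasure T → Set Bool)
  | 0 => fun _ => Set.univ
  | m + 1 => ggSOf σ (ggDOf τ (ggSseq σ τ m))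

/-- Interim correlated rationalizability in the global game. -/
noncomputable def ggSicr (σ : T → Set.Icc (-1:ℝ) 2)
    (τ : T → ProbabilityMeasure (ProbabilityMeasure T))
    (β : ProbabilityMeasure T) : Set Bool :=
  ⋂ m : ℕ, ggSseq σ τ m β

/-- The expected state `x_β = ∫ σ dβ` under the belief `β`. -/
noncomputable def xval (σ : T → Set.Icc (-1:ℝ) 2) (β : ProbabilityMeasure T) : ℝ :=
  ∫ t, (σ t : ℝ) ∂β.toMeasure

/-- `F_β(E) = ∫ τ(t)(E) dβ(t)`: the expected fraction of players with beliefs in `E`. -/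
noncomputable def Fval (τ : T → ProbabilityMeasure (ProbabilityMeasure T))
    (β : ProbabilityMeasure T) (E : Set (ProbabilityMeasure T)) : ℝ :=
  ∫ t, ((τ t E : ℝ≥0) : ℝ) ∂β.toMeasure

/-- The belief operator `B_f(E) = {β ∈ E : F_β(E) ≥ f(β)}`. -/
def Bop (τ : T → ProbabilityMeasure (ProbabilityMeasure T))
    (f : ProbabilityMeasure T → ℝ) (E : Set (ProbabilityMeasure T)) :
    Set (ProbabilityMeasure T) :=
  {β ∈ E | f β ≤ Fval τ β E}

/-- The certainty operator `C_f(E) = ⋂ₙ B_f^n(E)`. -/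
def Cop (τ : T → ProbabilityMeasure (ProbabilityMeasure T))
    (f : ProbabilityMeasure T → ℝ) (E : Set (ProbabilityMeasure T)) :
    Set (ProbabilityMeasure T) :=
  ⋂ n : ℕ, (Bop τ f)^[n + 1] E


section AuxLemmas

variable {T : Type*}
  [TopologicalSpace T] [CompactSpace T] [TopologicalSpace.MetrizableSpace T]
  [MeasurableSpace T] [BorelSpace T] [Nonempty T]

lemma usc_of_approx {X : Type*} [TopologicalSpace X] {f : X → ℝ} {Φ : ℕ → X → ℝ}
    (hcont : ∀ n, Continuous (Φ n)) (hle : ∀ n x, f x ≤ Φ n x)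
    (htend : ∀ x, Filter.Tendsto (fun n => Φ n x) Filter.atTop (nhds (f x))) :
    UpperSemicontinuous f := by
  intro x y hy
  obtain ⟨n, hn⟩ := ((htend x).eventually_lt_const hy).exists
  filter_upwards [(hcont n).continuousAt.eventually_lt_const hn] with x' hx'
  exact lt_of_le_of_lt (hle n x') hx'

lemma Fval_usc (τ : T → ProbabilityMeasure (ProbabilityMeasure T)) (hτ : Continuous τ)
    {E : Set (ProbabilityMeasure T)} (hE : IsClosed E) :
    UpperSemicontinuous (fun β : ProbabilityMeasure T => Fval τ β E) := by
  classical
  set fs : ℕ → (ProbabilityMeasure T →ᵇ ℝ≥0) := fun n => hE.apprSeq n with hfs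
  set G : ℕ → T → ℝ := fun n t => (((τ t).toFiniteMeasure.testAgainstNN (fs n) : ℝ≥0) : ℝ)
    with hG
  have hGcont : ∀ n, Continuous (G n) := fun n =>
    NNReal.continuous_coe.comp
      ((ProbabilityMeasure.continuous_testAgainstNN_eval (fs n)).comp hτ)
  have hGbd : ∀ n t, G n t ≤ 1 := by
    intro n t
    have h1 : ((τ t).toFiniteMeasure.testAgainstNN (fs n) : ℝ≥0∞) ≤ 1 := by
      rw [FiniteMeasure.testAgainstNN_coe_eq]
      calc ∫⁻ μ, fs n μ ∂((τ t) : Measure (ProbabilityMeasure T))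
          ≤ ∫⁻ _, 1 ∂((τ t) : Measure (ProbabilityMeasure T)) := by
            refine lintegral_mono fun μ => ?_
            have h0 : fs n μ ≤ 1 := HasOuterApproxClosed.apprSeq_apply_le_one hE n μ
            exact ENNReal.coe_le_one_iff.mpr h0
        _ = 1 := by simp
    exact_mod_cast h1
  have hGnn : ∀ n t, (0:ℝ) ≤ G n t := fun n t => NNReal.coe_nonneg _
  have key : ∀ t n, ((τ t E : ℝ≥0) : ℝ) ≤ G n t := by
    intro t n
    have h1 : ((τ t) : Measure (ProbabilityMeasure T)) E
        ≤ ∫⁻ μ, fs n μ ∂((τ t) : Measure (ProbabilityMeasure T)) :=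
      HasOuterApproxClosed.measure_le_lintegral hE _ n
    have h2 : ((τ t E : ℝ≥0) : ℝ≥0∞)
        ≤ ((τ t).toFiniteMeasure.testAgainstNN (fs n) : ℝ≥0∞) := by
      rw [ProbabilityMeasure.ennreal_coeFn_eq_coeFn_toMeasure,
        FiniteMeasure.testAgainstNN_coe_eq,
        ProbabilityMeasure.toMeasure_comp_toFiniteMeasure_eq_toMeasure]
      exact h1
    exact_mod_cast h2
  have hGt : ∀ t, Filter.Tendsto (fun n => G n t) Filter.atTop (nhds ((τ t E : ℝ≥0) : ℝ)) := by
    intro t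
    have h := HasOuterApproxClosed.tendsto_lintegral_apprSeq hE
      ((τ t) : Measure (ProbabilityMeasure T))
    have hne : ((τ t) : Measure (ProbabilityMeasure T)) E ≠ ⊤ := measure_ne_top _ _
    have h2 := (ENNReal.tendsto_toReal hne).comp h
    have heq : (((τ t) : Measure (ProbabilityMeasure T)) E).toReal = ((τ t E : ℝ≥0) : ℝ) := by
      rw [← ProbabilityMeasure.ennreal_coeFn_eq_coeFn_toMeasure, ENNReal.coe_toReal]
    rw [heq] at h2
    have hGeq : (fun n => G n t)
        = fun n => (∫⁻ μ, fs n μ ∂((τ t) : Measure (ProbabilityMeasure T))).toReal := by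
      funext n
      simp only [hG, FiniteMeasure.testAgainstNN,
        ProbabilityMeasure.toMeasure_comp_toFiniteMeasure_eq_toMeasure]
      rfl
    rw [hGeq]
    exact h2
  have hgusc : UpperSemicontinuous (fun t => ((τ t E : ℝ≥0) : ℝ)) :=
    usc_of_approx hGcont (fun n t => key t n) hGt
  have hgmeas : Measurable (fun t => ((τ t E : ℝ≥0) : ℝ)) := hgusc.measurable
  have hgint : ∀ β : ProbabilityMeasure T,
      Integrable (fun t => ((τ t E : ℝ≥0) : ℝ)) β.toMeasure := by
    intro β
    refine ⟨hgmeas.aestronglyMeasurable, HasFiniteIntegral.of_bounded (C := 1) ?_⟩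
    refine Filter.Eventually.of_forall fun t => ?_
    rw [Real.norm_eq_abs, abs_of_nonneg (NNReal.coe_nonneg _)]
    exact (key t 0).trans (hGbd 0 t)
  have hGint : ∀ n (β : ProbabilityMeasure T), Integrable (G n) β.toMeasure := by
    intro n β
    refine ⟨((hGcont n).measurable).aestronglyMeasurable,
      HasFiniteIntegral.of_bounded (C := 1) ?_⟩
    refine Filter.Eventually.of_forall fun t => ?_
    rw [Real.norm_eq_abs, abs_of_nonneg (hGnn n t)]
    exact hGbd n t
  set Φ : ℕ → ProbabilityMeasure T → ℝ := fun n β => ∫ t, G n t ∂β.toMeasure with hΦ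
  have hΦcont : ∀ n, Continuous (Φ n) := by
    intro n
    have := MeasureTheory.ProbabilityMeasure.continuous_integral_boundedContinuousFunction
      (X := T) (BoundedContinuousFunction.mkOfCompact ⟨G n, hGcont n⟩)
    simpa [hΦ] using this
  have hΦle : ∀ n β, Fval τ β E ≤ Φ n β := by
    intro n β
    exact integral_mono (hgint β) (hGint n β) (fun t => key t n)
  have hΦt : ∀ β, Filter.Tendsto (fun n => Φ n β) Filter.atTop (nhds (Fval τ β E)) := by
    intro β
    refine tendsto_integral_of_dominated_convergence (fun _ => (1:ℝ))
      (fun n => ((hGcont n).measurable).aestronglyMeasurable) (integrable_const 1)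
      (fun n => Filter.Eventually.of_forall fun t => ?_)
      (Filter.Eventually.of_forall fun t => hGt t)
    rw [Real.norm_eq_abs, abs_of_nonneg (hGnn n t)]
    exact hGbd n t
  exact usc_of_approx hΦcont hΦle hΦt

end AuxLemmas

/-- If `H ⊆ Δ(T)` is closed, then `β ↦ F_β(H)` is upper semicontinuous;
consequently, for every closed `H`, the sets `B_x(H)` and `C_x(H)` are closed. -/
theorem gg_Fval_usc_and_Bx_Cx_closed
    (σ : T → Set.Icc (-1:ℝ) 2) (τ : T → ProbabilityMeasure (ProbabilityMeasure T))
    (hσ : Continuous σ) (hτ : Continuous τ)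
    (H : Set (ProbabilityMeasure T)) (hH : IsClosed H) :
    UpperSemicontinuous (fun β => Fval τ β H) ∧
    IsClosed (Bop τ (xval σ) H) ∧
    IsClosed (Cop τ (xval σ) H) := by
  have husc : ∀ E : Set (ProbabilityMeasure T), IsClosed E →
      UpperSemicontinuous (fun β => Fval τ β E) := fun E hE => Fval_usc τ hτ hE
  have hx : Continuous (xval σ) := by
    have := MeasureTheory.ProbabilityMeasure.continuous_integral_boundedContinuousFunction
      (X := T) (BoundedContinuousFunction.mkOfCompact ⟨fun t => (σ t : ℝ),
        continuous_subtype_val.comp hσ⟩)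
    simp at this
    exact this
  have hB : ∀ E : Set (ProbabilityMeasure T), IsClosed E →
      IsClosed (Bop τ (xval σ) E) := by
    intro E hE
    have h2 : UpperSemicontinuous (fun β => Fval τ β E + (- xval σ β)) :=
      (husc E hE).add (hx.neg.upperSemicontinuous)
    have h3 : IsClosed {β | xval σ β ≤ Fval τ β E} := by
      have heq : {β | xval σ β ≤ Fval τ β E}
          = ((fun β => Fval τ β E + (- xval σ β)) ⁻¹' Set.Iio 0)ᶜ := by
        ext β
        simp only [Set.mem_setOf_eq, Set.mem_compl_iff, Set.mem_preimage, Set.mem_Iio, not_lt]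
        constructor <;> intro h <;> linarith
      rw [heq]
      exact (h2.isOpen_preimage 0).isClosed_compl
    have hBeq : Bop τ (xval σ) E = E ∩ {β | xval σ β ≤ Fval τ β E} := rfl
    rw [hBeq]
    exact hE.inter h3
  have hIter : ∀ n, IsClosed ((Bop τ (xval σ))^[n] H) := by
    intro n
    induction n with
    | zero => simpa using hH
    | succ n ih => rw [Function.iterate_succ_apply']; exact hB _ ih
  exact ⟨husc H hH, hB H hH, isClosed_iInter fun n => hIter (n + 1)⟩
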